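/- arXiv:2211.04871 — 2 statements merged into one kernel-verified Lean document; each statement's English description precedes it below -/
import Mathlib

section
/- Every interval containment bigraph is 12-representable. More precisely, given a bipartite graph G with bipartition (X,Y) and intervals {I_v : v ∈ V(G)} with pairwise distinct endpoints such that for x ∈ X, y ∈ Y, xy ∈ E(G) iff I_x ⊇ I_y, label each vertex v by the rank of the left endpoint of I_v among all left endpoints; let π_r be the permutation of [n] listing labels in order of right endpoints from left to right, and let π_y, π_x be arbitrary permutations of the labels of Y and of X respectively. Then the word w = π_y π_r π_x 12-represents G. -/
/-- The subword of `w` consisting of the occurrences of `x` and `y`. -/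
def subw {n : ℕ} (w : List (Fin n)) (x y : Fin n) : List (Fin n) :=
  w.filter fun a => decide (a = x ∨ a = y)

/-- A word has a 12-match if some letter is immediately followed by a strictly larger one. -/
def Has12 {n : ℕ} (s : List (Fin n)) : Prop :=
  ∃ a b : Fin n, a < b ∧ [a, b] <:+: s

/-- `w` 12-represents the labeled graph `G` on `Fin n`. -/
def Rep12 {n : ℕ} (w : List (Fin n)) (G : SimpleGraph (Fin n)) : Prop :=
  (∀ i : Fin n, i ∈ w) ∧
  ∀ x y : Fin n, x ≠ y → (G.Adj x y ↔ ¬ Has12 (subw w x y))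

/-- A graph is 12-representable if some labeling of its vertices admits a 12-representant. -/
def Rep12able {V : Type} [Fintype V] (G : SimpleGraph V) : Prop :=
  ∃ (f : V ≃ Fin (Fintype.card V)) (w : List (Fin (Fintype.card V))),
    Rep12 w (G.map f.toEmbedding)
lemma not_has12_nil {n : ℕ} : ¬ Has12 ([] : List (Fin n)) := by
  rintro ⟨a, b, _, hin⟩
  simpa using hin.length_le

lemma not_has12_singleton {n : ℕ} (a : Fin n) : ¬ Has12 [a] := by
  rintro ⟨x, y, _, hin⟩
  simpa using hin.length_le

lemma has12_cons_cons {n : ℕ} (a b : Fin n) (l : List (Fin n)) :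
    Has12 (a :: b :: l) ↔ a < b ∨ Has12 (b :: l) := by
  constructor
  · rintro ⟨x, y, hxy, hin⟩
    rcases List.infix_cons_iff.1 hin with h | h
    · rw [List.cons_prefix_cons] at h
      obtain ⟨rfl, h2⟩ := h
      rw [List.cons_prefix_cons] at h2
      obtain ⟨rfl, _⟩ := h2
      exact Or.inl hxy
    · exact Or.inr ⟨x, y, hxy, h⟩
  · rintro (h | ⟨x, y, hxy, hin⟩)
    · exact ⟨a, b, h, ⟨[], l, rfl⟩⟩
    · exact ⟨x, y, hxy, hin.trans ((b :: l).suffix_cons a).isInfix⟩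

lemma subw_append {n : ℕ} (w₁ w₂ : List (Fin n)) (x y : Fin n) :
    subw (w₁ ++ w₂) x y = subw w₁ x y ++ subw w₂ x y :=
  List.filter_append _ _

lemma mem_subw {n : ℕ} {w : List (Fin n)} {x y a : Fin n} :
    a ∈ subw w x y ↔ a ∈ w ∧ (a = x ∨ a = y) := by
  simp [subw, List.mem_filter]

lemma subw_nodup {n : ℕ} {w : List (Fin n)} (h : w.Nodup) (x y : Fin n) :
    (subw w x y).Nodup := h.filter _

lemma subw_comm {n : ℕ} (w : List (Fin n)) (x y : Fin n) :
    subw w x y = subw w y x := by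
  unfold subw
  congr 1
  funext a
  simp [or_comm]

lemma eq_single {n : ℕ} {l : List (Fin n)} {v : Fin n} (hnd : l.Nodup)
    (hsub : ∀ a ∈ l, a = v) (hv : v ∈ l) : l = [v] := by
  rcases l with _ | ⟨a, t⟩
  · cases hv
  · have ha : a = v := hsub a (by simp)
    subst ha
    have ht : t = [] := by
      rcases t with _ | ⟨c, t⟩
      · rfl
      · have hc : c = a := hsub c (by simp)
        subst hc
        simp [List.nodup_cons] at hnd
    rw [ht]

lemma eq_pair {n : ℕ} {l : List (Fin n)} {u v : Fin n} (hnd : l.Nodup)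
    (hsub : ∀ a ∈ l, a = u ∨ a = v) (hu : u ∈ l) (hv : v ∈ l) (huv : u ≠ v) :
    l = [u, v] ∨ l = [v, u] := by
  rcases l with _ | ⟨a, _ | ⟨b, t⟩⟩
  · cases hu
  · simp at hu hv
    exact absurd (hu.trans hv.symm) huv
  · have ht : t = [] := by
      rcases t with _ | ⟨c, t⟩
      · rfl
      · exfalso
        have ha := hsub a (by simp)
        have hb := hsub b (by simp)
        have hc := hsub c (by simp)
        simp [List.nodup_cons] at hnd
        rcases ha with rfl | rfl <;> rcases hb with rfl | rfl <;>
          rcases hc with rfl | rfl <;> tauto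
    subst ht
    have ha := hsub a (by simp)
    have hb := hsub b (by simp)
    simp [List.nodup_cons] at hnd
    rcases ha with rfl | rfl <;> rcases hb with rfl | rfl <;> tauto

lemma has12_quad {n : ℕ} (a b c d : Fin n) :
    Has12 [a, b, c, d] ↔ (a < b ∨ b < c ∨ c < d) := by
  rw [has12_cons_cons, has12_cons_cons, has12_cons_cons]
  simp [not_has12_singleton d]


/-- Every interval containment bigraph is 12-representable via the explicit word
`w = πy ++ πr ++ πx`.  Vertices are identified with their labels: `ℓ` is strictly
monotone, so vertex `v` has the `v`-th smallest left endpoint. -/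
theorem rep12_of_intervalContainmentBigraph {n : ℕ} (G : SimpleGraph (Fin n))
    (X : Set (Fin n))
    (ℓ r : Fin n → ℝ)
    -- each interval is nondegenerate
    (hlr : ∀ v, ℓ v < r v)
    -- labels are by rank of left endpoints
    (hmono : StrictMono ℓ)
    -- all endpoints are distinct
    (hrinj : Function.Injective r)
    (hlne : ∀ u v, ℓ u ≠ r v)
    -- (X, Y) is a bipartition of G
    (hX : ∀ x₁ x₂, x₁ ∈ X → x₂ ∈ X → ¬ G.Adj x₁ x₂)
    (hY : ∀ y₁ y₂, y₁ ∉ X → y₂ ∉ X → ¬ G.Adj y₁ y₂)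
    -- edges are interval containments
    (hadj : ∀ x ∈ X, ∀ y ∉ X, G.Adj x y ↔ (ℓ x < ℓ y ∧ r y < r x))
    -- πr lists all vertices in increasing order of right endpoints
    (πr : List (Fin n)) (hπr : πr.Pairwise fun u v => r u < r v)
    (hπrm : ∀ v, v ∈ πr)
    -- πx and πy are arbitrary permutations of X resp. Y
    (πx : List (Fin n)) (hπx : πx.Nodup) (hπxm : ∀ v, v ∈ πx ↔ v ∈ X)
    (πy : List (Fin n)) (hπy : πy.Nodup) (hπym : ∀ v, v ∈ πy ↔ v ∉ X) :
    Rep12 (πy ++ πr ++ πx) G := by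
  have hπrnd : πr.Nodup := hπr.imp fun h e => absurd (e ▸ h) (lt_irrefl _)
  constructor
  · intro i
    have := hπrm i
    simp [List.mem_append]
    tauto
  intro u v huv
  -- the πr pair, with its order
  have hrpair : ∀ a b : Fin n, a ≠ b →
      (r a < r b ∧ subw πr a b = [a, b]) ∨ (r b < r a ∧ subw πr a b = [b, a]) := by
    intro a b hab
    have hpw : (subw πr a b).Pairwise (fun s t => r s < r t) :=
      hπr.sublist List.filter_sublist
    have hp := eq_pair (subw_nodup hπrnd a b) (fun c hc => (mem_subw.1 hc).2)
      (mem_subw.2 ⟨hπrm a, Or.inl rfl⟩) (mem_subw.2 ⟨hπrm b, Or.inr rfl⟩) hab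
    rcases hp with h | h
    · left
      refine ⟨?_, h⟩
      rw [h] at hpw
      simpa using hpw
    · right
      refine ⟨?_, h⟩
      rw [h] at hpw
      simpa using hpw
  -- the mixed case
  have main : ∀ a b : Fin n, a ≠ b → a ∈ X → b ∉ X →
      (G.Adj a b ↔ ¬ Has12 (subw (πy ++ πr ++ πx) a b)) := by
    intro a b hab haX hbX
    have hy1 : subw πy a b = [b] := by
      refine eq_single (subw_nodup hπy a b) ?_ (mem_subw.2 ⟨(hπym b).2 hbX, Or.inr rfl⟩)
      intro c hc
      obtain ⟨hcm, hc2⟩ := mem_subw.1 hc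
      rcases hc2 with rfl | rfl
      · exact absurd haX ((hπym c).1 hcm)
      · rfl
    have hx1 : subw πx a b = [a] := by
      refine eq_single (subw_nodup hπx a b) ?_ (mem_subw.2 ⟨(hπxm a).2 haX, Or.inl rfl⟩)
      intro c hc
      obtain ⟨hcm, hc2⟩ := mem_subw.1 hc
      rcases hc2 with rfl | rfl
      · rfl
      · exact absurd ((hπxm c).1 hcm) hbX
    rw [subw_append, subw_append, hy1, hx1, hadj a haX b hbX]
    rcases hrpair a b hab with ⟨hro, hre⟩ | ⟨hro, hre⟩
    · -- r a < r b : not adjacent, and [b,a,b,a] has a 12-match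
      rw [hre]
      simp only [List.cons_append, List.nil_append, List.singleton_append]
      rw [has12_quad]
      refine iff_of_false ?_ (not_not_intro ?_)
      · rintro ⟨-, hba⟩
        exact absurd hro (asymm hba)
      · rcases hab.lt_or_gt with h | h <;> tauto
    · -- r b < r a : adjacent iff ℓ a < ℓ b, word is [b,b,a,a]
      rw [hre]
      simp only [List.cons_append, List.nil_append, List.singleton_append]
      rw [has12_quad]
      constructor
      · rintro ⟨hl, -⟩ hcon
        have hba : b < a := by
          rcases hcon with h | h | h
          · exact absurd h (lt_irrefl _)
          · exact h
          · exact absurd h (lt_irrefl _)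
        exact absurd hl (not_lt.2 (hmono.monotone hba.le))
      · intro hn
        refine ⟨?_, hro⟩
        rcases hab.lt_or_gt with h | h
        · exact hmono h
        · exact absurd (Or.inr (Or.inl h)) hn
  by_cases hu : u ∈ X <;> by_cases hv : v ∈ X
  · -- both in X
    have hA : ¬ G.Adj u v := hX u v hu hv
    have hy0 : subw πy u v = [] := by
      rw [List.eq_nil_iff_forall_not_mem]
      intro c hc
      obtain ⟨hcm, hc2⟩ := mem_subw.1 hc
      have hcX := (hπym c).1 hcm
      rcases hc2 with rfl | rfl
      · exact hcX hu
      · exact hcX hv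
    have hxp := eq_pair (subw_nodup hπx u v) (fun c hc => (mem_subw.1 hc).2)
      (mem_subw.2 ⟨(hπxm u).2 hu, Or.inl rfl⟩) (mem_subw.2 ⟨(hπxm v).2 hv, Or.inr rfl⟩) huv
    rw [subw_append, subw_append, hy0]
    rcases hrpair u v huv with ⟨-, hre⟩ | ⟨-, hre⟩ <;> rcases hxp with hxe | hxe <;>
      rw [hre, hxe] <;>
      simp only [List.cons_append, List.nil_append] <;>
      exact iff_of_false hA (not_not_intro ((has12_quad _ _ _ _).2 (by
        rcases huv.lt_or_gt with h | h <;> tauto)))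
  · exact main u v huv hu hv
  · rw [G.adj_comm, subw_comm]
    exact main v u huv.symm hv hu
  · -- both outside X
    have hA : ¬ G.Adj u v := hY u v hu hv
    have hx0 : subw πx u v = [] := by
      rw [List.eq_nil_iff_forall_not_mem]
      intro c hc
      obtain ⟨hcm, hc2⟩ := mem_subw.1 hc
      have hcX := (hπxm c).1 hcm
      rcases hc2 with rfl | rfl
      · exact hu hcX
      · exact hv hcX
    have hyp := eq_pair (subw_nodup hπy u v) (fun c hc => (mem_subw.1 hc).2)
      (mem_subw.2 ⟨(hπym u).2 hu, Or.inl rfl⟩) (mem_subw.2 ⟨(hπym v).2 hv, Or.inr rfl⟩) huv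
    rw [subw_append, subw_append, hx0]
    rcases hrpair u v huv with ⟨-, hre⟩ | ⟨-, hre⟩ <;> rcases hyp with hye | hye <;>
      rw [hre, hye] <;>
      simp only [List.cons_append, List.nil_append, List.append_nil] <;>
      exact iff_of_false hA (not_not_intro ((has12_quad _ _ _ _).2 (by
        rcases huv.lt_or_gt with h | h <;> tauto)))
end

section
/- Let G be a simple-triangle graph with a model in which all triangle endpoints are distinct, where vertex v has apex point p_v on the top line L_1 and base interval I_v on the bottom line L_2, and two vertices are adjacent iff their triangles intersect. Label vertex v by the rank i of p_v among all apex points from left to right. Then for two vertices u, v with labels i < j, the interval I_u lies entirely to the left of I_v if and only if u and v are adjacent in the complement of G. Consequently, the word w obtained by listing the labels of the owners of all 2n interval endpoints in right-to-left order is a 12-representant of the complement of G. -/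
/-- The filled triangle with apex `(p, 1)` on line `L₁` and base interval
`[ℓ, r]` on line `L₂` (the real line at height 0). -/
def triangleRegion (p ℓ r : ℝ) : Set (ℝ × ℝ) :=
  convexHull ℝ {(p, 1), (ℓ, 0), (r, 0)}

open scoped List

section Aux

lemma tri_disjoint {pu ℓu ru pv ℓv rv : ℝ} (hu : ℓu ≤ ru) (hp : pu < pv)
    (h : ru < ℓv) (hv : ℓv ≤ rv) :
    ¬ (triangleRegion pu ℓu ru ∩ triangleRegion pv ℓv rv).Nonempty := by
  rintro ⟨z, hz1, hz2⟩
  set c : ℝ := pu - ru with hc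
  have hlin : IsLinearMap ℝ (fun z : ℝ × ℝ => z.1 - c * z.2) := by
    constructor
    · intro a b; simp [Prod.fst_add, Prod.snd_add]; ring
    · intro m a; simp [Prod.smul_fst, Prod.smul_snd, smul_eq_mul]; ring
  have h1 : triangleRegion pu ℓu ru ⊆ {z : ℝ × ℝ | z.1 - c * z.2 ≤ ru} := by
    apply convexHull_min _ (convex_halfSpace_le hlin ru)
    rintro q (rfl | rfl | rfl) <;> simp [hc] <;> linarith
  have h2 : triangleRegion pv ℓv rv ⊆ {z : ℝ × ℝ | ru < z.1 - c * z.2} := by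
    apply convexHull_min _ (convex_halfSpace_gt hlin ru)
    rintro q (rfl | rfl | rfl) <;> simp [hc] <;> linarith
  have := h1 hz1
  have := h2 hz2
  simp only [Set.mem_setOf_eq] at *
  linarith

lemma tri_meet {pu ℓu ru pv ℓv rv : ℝ} (hp : pu < pv) (h : ℓv < ru) :
    (triangleRegion pu ℓu ru ∩ triangleRegion pv ℓv rv).Nonempty := by
  set f : ℝ → ℝ := fun t => (1 - t) * (ru - ℓv) + t * (pu - pv) with hf
  have hcont : ContinuousOn f (Set.Icc 0 1) := by fun_prop
  have hmem : (0:ℝ) ∈ Set.Icc (f 1) (f 0) := by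
    constructor <;> simp [hf] <;> linarith
  obtain ⟨t, ht, hft⟩ := intermediate_value_Icc' (by norm_num : (0:ℝ) ≤ 1) hcont hmem
  obtain ⟨ht0, ht1⟩ := ht
  refine ⟨((1 - t) * ru + t * pu, t), ?_, ?_⟩
  · have : ((1 - t) * ru + t * pu, t) = (1 - t) • ((ru, 0) : ℝ × ℝ) + t • ((pu, 1) : ℝ × ℝ) := by
      simp [Prod.ext_iff]
    rw [this]
    exact (convex_convexHull ℝ _) (subset_convexHull ℝ _ (by simp))
      (subset_convexHull ℝ _ (by simp)) (by linarith) ht0 (by ring)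
  · have heq : (1 - t) * ru + t * pu = (1 - t) * ℓv + t * pv := by
      simp [hf] at hft; linarith [hft]
    rw [show (((1 - t) * ru + t * pu, t) : ℝ × ℝ) = (1 - t) • ((ℓv, 0) : ℝ × ℝ) + t • ((pv, 1) : ℝ × ℝ) by
      simp [Prod.ext_iff]; exact heq]
    exact (convex_convexHull ℝ _) (subset_convexHull ℝ _ (by simp))
      (subset_convexHull ℝ _ (by simp)) (by linarith) ht0 (by ring)

lemma pair_sublist {α : Type*} {a b : α} (hab : a ≠ b) :
    ∀ {l : List α}, a ∈ l → b ∈ l → [a, b] <+ l ∨ [b, a] <+ l := by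
  intro l
  induction l with
  | nil => simp
  | cons c t ih =>
    intro ha hb
    rcases eq_or_ne a c with rfl | ha'
    · have hbt : b ∈ t := by
        rcases List.mem_cons.1 hb with h | h
        · exact absurd h hab.symm
        · exact h
      exact Or.inl ((List.singleton_sublist.2 hbt).cons₂ a)
    · rcases eq_or_ne b c with rfl | hb'
      · have hat : a ∈ t := by
          rcases List.mem_cons.1 ha with h | h
          · exact absurd h ha'
          · exact h
        exact Or.inr ((List.singleton_sublist.2 hat).cons₂ b)
      · have hat : a ∈ t := by
          rcases List.mem_cons.1 ha with h | h; exact absurd h ha'; exact h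
        have hbt : b ∈ t := by
          rcases List.mem_cons.1 hb with h | h; exact absurd h hb'; exact h
        rcases ih hat hbt with h | h
        · exact Or.inl (h.cons c)
        · exact Or.inr (h.cons c)

lemma infix_of_sublist_two {α : Type*} {x y : α} (hxy : x ≠ y) :
    ∀ {s : List α}, (∀ a ∈ s, a = x ∨ a = y) → [x, y] <+ s → [x, y] <:+: s := by
  intro s
  induction s with
  | nil => intro _ h; exact absurd h (by simp)
  | cons c t ih =>
    intro hall h
    cases h with
    | cons _ h' =>
      exact List.infix_cons (ih (fun a ha => hall a (List.mem_cons_of_mem c ha)) h')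
    | cons_cons _ h' =>
      have hyt : y ∈ t := List.singleton_sublist.1 h'
      cases t with
      | nil => simp at hyt
      | cons d t' =>
        rcases hall d (by simp) with rfl | rfl
        · have hyt' : y ∈ t' := by
            rcases List.mem_cons.1 hyt with h | h
            · exact absurd h hxy.symm
            · exact h
          have : [d, y] <+ d :: t' := (List.singleton_sublist.2 hyt').cons₂ d
          exact List.infix_cons (ih (fun a ha => hall a (List.mem_cons_of_mem _ ha)) this)
        · exact ⟨[], t', rfl⟩

end Aux

/-- Given a simple-triangle model of `G` with distinct endpoints, vertices labeled
by apex rank (`p` strictly monotone): for `u < v`, the interval `I_u` lies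
entirely to the left of `I_v` iff `uv` is an edge of the complement; and the word
listing the owners of the `2n` interval endpoints from right to left is a
12-representant of the complement of `G`. -/
theorem rep12_complement_of_simpleTriangle {n : ℕ} (G : SimpleGraph (Fin n))
    (p ℓ r : Fin n → ℝ)
    (hlr : ∀ v, ℓ v < r v)
    -- labels are by rank of apex points
    (hp : StrictMono p)
    -- all interval endpoints are distinct
    (hlinj : Function.Injective ℓ) (hrinj : Function.Injective r)
    (hlne : ∀ u v, ℓ u ≠ r v)
    -- adjacency is triangle intersection
    (hadj : ∀ u v : Fin n, u ≠ v →
      (G.Adj u v ↔ (triangleRegion (p u) (ℓ u) (r u) ∩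
                    triangleRegion (p v) (ℓ v) (r v)).Nonempty)) :
    (∀ u v : Fin n, u < v → (r u < ℓ v ↔ Gᶜ.Adj u v)) ∧
    -- the word of endpoint owners, read right to left, 12-represents the complement
    ∀ (ps : List (ℝ × Fin n)),
      ((ps.map Prod.fst).Pairwise (· > ·)) →
      (ps.Perm ((List.finRange n).flatMap fun v => [(ℓ v, v), (r v, v)])) →
      Rep12 (ps.map Prod.snd) Gᶜ := by
  have key : ∀ u v : Fin n, u < v → (r u < ℓ v ↔ Gᶜ.Adj u v) := by
    intro u v huv
    rw [SimpleGraph.compl_adj, hadj u v huv.ne]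
    constructor
    · intro h
      exact ⟨huv.ne, tri_disjoint (hlr u).le (hp huv) h (hlr v).le⟩
    · rintro ⟨-, hnm⟩
      by_contra hcon
      have hlt : ℓ v < r u := lt_of_le_of_ne (not_lt.1 hcon) (hlne v u)
      exact hnm (tri_meet (hp huv) hlt)
  refine ⟨key, ?_⟩
  intro ps hsort hperm
  have hpw : ps.Pairwise (fun a b : ℝ × Fin n => a.1 > b.1) := List.pairwise_map.1 hsort
  have memfull : ∀ q ∈ ps, q = (ℓ q.2, q.2) ∨ q = (r q.2, q.2) := by
    intro q hq
    have := hperm.subset hq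
    simp only [List.mem_flatMap, List.mem_finRange, true_and] at this
    obtain ⟨v, hv⟩ := this
    simp only [List.mem_cons, List.mem_singleton] at hv
    rcases hv with rfl | hv
    · exact Or.inl rfl
    · rcases hv with rfl | hv
      · exact Or.inr rfl
      · simp at hv
  have memps : ∀ v : Fin n, (ℓ v, v) ∈ ps ∧ (r v, v) ∈ ps := by
    intro v
    constructor
    · apply hperm.mem_iff.2
      simp only [List.mem_flatMap, List.mem_finRange, true_and]
      exact ⟨v, by simp⟩
    · apply hperm.mem_iff.2
      simp only [List.mem_flatMap, List.mem_finRange, true_and]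
      exact ⟨v, by simp⟩
  -- main characterization for x < y
  have main : ∀ x y : Fin n, x < y → (Gᶜ.Adj x y ↔ ¬ Has12 (subw (ps.map Prod.snd) x y)) := by
    intro x y hxy
    set P : ℝ × Fin n → Bool := fun q => decide (q.2 = x ∨ q.2 = y) with hP
    have hsubw : subw (ps.map Prod.snd) x y = (ps.filter P).map Prod.snd := by
      simp only [subw, List.filter_map]
      rfl
    have hpwf : (ps.filter P).Pairwise (fun a b : ℝ × Fin n => a.1 > b.1) :=
      hpw.sublist List.filter_sublist
    have hallsub : ∀ a ∈ subw (ps.map Prod.snd) x y, a = x ∨ a = y := by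
      intro a ha
      simp only [subw, List.mem_filter, decide_eq_true_eq] at ha
      exact ha.2
    rw [← key x y hxy]
    rcases lt_or_ge (r x) (ℓ y) with h | hge
    · -- complement edge: no 12 pattern
      refine ⟨fun _ => ?_, fun _ => h⟩
      rintro ⟨a, b, hab, hinf⟩
      have ha := hallsub a (hinf.subset (by simp))
      have hb := hallsub b (hinf.subset (by simp))
      have hax : a = x ∧ b = y := by
        rcases ha with rfl | rfl <;> rcases hb with rfl | rfl
        · exact absurd hab (lt_irrefl _)
        · exact ⟨rfl, rfl⟩
        · exact absurd (hab.trans hxy) (lt_irrefl _)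
        · exact absurd hab (lt_irrefl _)
      obtain ⟨rfl, rfl⟩ := hax
      have hsl : [a, b] <+ (ps.filter P).map Prod.snd := by
        rw [← hsubw]; exact hinf.sublist
      obtain ⟨l'', hl''s, hl''m⟩ := List.sublist_map_iff.1 hsl
      match l'', hl''m with
      | [q1, q2], hm =>
        simp only [List.map_cons, List.map_nil, List.cons.injEq, and_true] at hm
        obtain ⟨hq1, hq2⟩ := hm
        have hq1p : q1 ∈ ps := (List.filter_sublist : ps.filter P <+ ps).subset (hl''s.subset (by simp))
        have hq2p : q2 ∈ ps := (List.filter_sublist : ps.filter P <+ ps).subset (hl''s.subset (by simp))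
        have h12 : q1.1 > q2.1 := (List.pairwise_iff_forall_sublist.1 hpwf) hl''s
        have hb1 : q1.1 ≤ r a := by
          rcases memfull q1 hq1p with he | he <;> rw [he, ← hq1] <;> simp [(hlr a).le]
        have hb2 : ℓ b ≤ q2.1 := by
          rcases memfull q2 hq2p with he | he <;> rw [he, ← hq2] <;> simp [(hlr b).le]
        rw [hq1, hq2] at h
        linarith
    · -- G-edge: 12 pattern exists
      have hlt : ℓ y < r x := lt_of_le_of_ne hge (hlne y x)
      have hm1 : (r x, x) ∈ ps.filter P :=
        List.mem_filter.2 ⟨(memps x).2, by simp [hP]⟩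
      have hm2 : (ℓ y, y) ∈ ps.filter P :=
        List.mem_filter.2 ⟨(memps y).1, by simp [hP]⟩
      have hne : ((r x, x) : ℝ × Fin n) ≠ (ℓ y, y) := by
        simp [Prod.ext_iff]; intro _; exact hxy.ne
      have hsl : [((r x, x) : ℝ × Fin n), (ℓ y, y)] <+ ps.filter P := by
        rcases pair_sublist hne hm1 hm2 with h | h
        · exact h
        · have := (List.pairwise_iff_forall_sublist.1 hpwf) h
          simp only [gt_iff_lt] at this
          linarith
      have hsl2 : [x, y] <+ subw (ps.map Prod.snd) x y := by
        rw [hsubw]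
        have := hsl.map Prod.snd
        simpa using this
      have hinf := infix_of_sublist_two hxy.ne hallsub hsl2
      constructor
      · intro hc; exact absurd hc (by linarith)
      · intro hn; exact absurd ⟨x, y, hxy, hinf⟩ hn
  refine ⟨?_, ?_⟩
  · intro i
    exact List.mem_map_of_mem (memps i).1
  · intro x y hxy
    rcases lt_or_gt_of_ne hxy with h | h
    · exact main x y h
    · have hsw : subw (ps.map Prod.snd) x y = subw (ps.map Prod.snd) y x := by
        unfold subw
        apply List.filter_congr
        intro a _
        exact decide_eq_decide.2 or_comm
      rw [Gᶜ.adj_comm, hsw]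
      exact main y x h
end
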